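/- arXiv:2002.07760 — 2 statements merged into one kernel-verified Lean document; each statement's English description precedes it below -/
import Mathlib

section
/- (Type C_N Weyl denominator formula) For any N nonzero complex numbers z₁, …, z_N, det_{1≤j,k≤N}( z_k^{j-N-1} − z_k^{N+1-j} ) = ∏_{ℓ=1}^{N} z_ℓ^{-N} (1 − z_ℓ²) · ∏_{1≤j<k≤N} (z_k − z_j)(1 − z_j z_k). -/
open Polynomial Finset Matrix

noncomputable def Spoly : ℕ → Polynomial ℂ
  | 0 => 1
  | 1 => Polynomial.X
  | (n+2) => Polynomial.X * Spoly (n+1) - Spoly n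

lemma Spoly_aux : ∀ n : ℕ, ((Spoly n).Monic ∧ (Spoly n).natDegree = n) ∧
    ((Spoly (n+1)).Monic ∧ (Spoly (n+1)).natDegree = n+1) := by
  intro n
  induction n with
  | zero => exact ⟨⟨monic_one, natDegree_one⟩, ⟨monic_X, natDegree_X⟩⟩
  | succ n ih =>
    refine ⟨ih.2, ?_, ?_⟩
    · show (Polynomial.X * Spoly (n+1) - Spoly n).Monic
      have h1 : (Polynomial.X * Spoly (n+1)).Monic := monic_X.mul ih.2.1
      have hd1 : (Polynomial.X * Spoly (n+1)).natDegree = n + 2 := by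
        rw [natDegree_mul X_ne_zero ih.2.1.ne_zero, natDegree_X, ih.2.2]; omega
      have hlt : (Spoly n).degree < (Polynomial.X * Spoly (n+1)).degree := by
        rw [Polynomial.degree_eq_natDegree h1.ne_zero, hd1,
          Polynomial.degree_eq_natDegree ih.1.1.ne_zero, ih.1.2]
        exact_mod_cast Nat.lt_succ_of_lt (Nat.lt_succ_self n)
      have := h1.add_of_left (q := -(Spoly n)) (by rwa [degree_neg])
      simpa [sub_eq_add_neg] using this
    · show (Polynomial.X * Spoly (n+1) - Spoly n).natDegree = n + 2
      have h1 : (Polynomial.X * Spoly (n+1)).Monic := monic_X.mul ih.2.1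
      have hd1 : (Polynomial.X * Spoly (n+1)).natDegree = n + 2 := by
        rw [natDegree_mul X_ne_zero ih.2.1.ne_zero, natDegree_X, ih.2.2]; omega
      have hlt : (Spoly n).degree < (Polynomial.X * Spoly (n+1)).degree := by
        rw [Polynomial.degree_eq_natDegree h1.ne_zero, hd1,
          Polynomial.degree_eq_natDegree ih.1.1.ne_zero, ih.1.2]
        exact_mod_cast Nat.lt_succ_of_lt (Nat.lt_succ_self n)
      rw [← hd1]
      exact natDegree_sub_eq_left_of_natDegree_lt (by
        rw [ih.1.2, hd1]; omega)

lemma Spoly_eval (z : ℂ) (hz : z ≠ 0) : ∀ n : ℕ,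
    ((Spoly n).eval (z + z⁻¹) * z ^ n = ∑ i ∈ range (n+1), (z^2)^i) ∧
    ((Spoly (n+1)).eval (z + z⁻¹) * z ^ (n+1) = ∑ i ∈ range (n+2), (z^2)^i) := by
  have hzz : z⁻¹ * z = 1 := inv_mul_cancel₀ hz
  intro n
  induction n with
  | zero =>
    constructor
    · simp [Spoly]
    · show (Polynomial.X : ℂ[X]).eval (z + z⁻¹) * z ^ 1 = _
      rw [eval_X]
      rw [sum_range_succ, sum_range_succ]
      simp only [pow_zero, pow_one]
      field_simp
      ring
  | succ n ih =>
    refine ⟨ih.2, ?_⟩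
    show (Polynomial.X * Spoly (n+1) - Spoly n).eval (z + z⁻¹) * z ^ (n+2) = _
    rw [eval_sub, eval_mul, eval_X]
    have key : ∀ x : ℂ, (x + 1) * ∑ i ∈ range (n+2), x^i - x * ∑ i ∈ range (n+1), x^i
        = ∑ i ∈ range (n+3), x^i := by
      intro x
      rw [sum_range_succ (fun i => x^i) (n+2), sum_range_succ (fun i => x^i) (n+1)]
      ring
    calc ((z + z⁻¹) * (Spoly (n+1)).eval (z + z⁻¹) - (Spoly n).eval (z + z⁻¹)) * z ^ (n+2)
        = (z^2 + 1) * ((Spoly (n+1)).eval (z + z⁻¹) * z^(n+1))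
          - z^2 * ((Spoly n).eval (z + z⁻¹) * z^n) := by
          field_simp
          ring
      _ = (z^2 + 1) * ∑ i ∈ range (n+2), (z^2)^i - z^2 * ∑ i ∈ range (n+1), (z^2)^i := by
          rw [ih.1, ih.2]
      _ = ∑ i ∈ range (n+3), (z^2)^i := key (z^2)

lemma entry_eq (N : ℕ) (z : ℂ) (hz : z ≠ 0) (j : ℕ) (hj : j < N) :
    z ^ ((j : ℤ) - N) - z ^ ((N : ℤ) - j) =
      (z ^ (-(N : ℤ)) * (1 - z ^ 2) * z ^ (N - 1)) *
        (Spoly (N - 1 - j)).eval (z + z⁻¹) := by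
  have hm : (N - 1 - j) + 1 = N - j := by omega
  have he : (Spoly (N - 1 - j)).eval (z + z⁻¹) * z ^ (N - 1 - j)
      = ∑ i ∈ range (N - j), (z ^ 2) ^ i := by
    rw [(Spoly_eval z hz (N - 1 - j)).1, hm]
  have hg : (1 - z ^ 2) * ∑ i ∈ range (N - j), (z ^ 2) ^ i = 1 - (z ^ 2) ^ (N - j) := by
    have := geom_sum_mul (z ^ 2) (N - j)
    linear_combination -this
  have hev : (Spoly (N - 1 - j)).eval (z + z⁻¹)
      = (∑ i ∈ range (N - j), (z ^ 2) ^ i) * (z ^ (N - 1 - j))⁻¹ := by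
    rw [← he, mul_inv_cancel_right₀ (pow_ne_zero _ hz)]
  rw [hev]
  have h1 : z ^ (-(N : ℤ)) * (1 - z ^ 2) * z ^ (N - 1) *
      ((∑ i ∈ range (N - j), (z ^ 2) ^ i) * (z ^ (N - 1 - j))⁻¹)
      = (z ^ (-(N : ℤ)) * z ^ (N - 1) * (z ^ (N - 1 - j))⁻¹) *
        ((1 - z ^ 2) * ∑ i ∈ range (N - j), (z ^ 2) ^ i) := by ring
  rw [h1, hg]
  have h2 : z ^ (-(N : ℤ)) * z ^ (N - 1) * (z ^ (N - 1 - j))⁻¹ = z ^ ((j : ℤ) - N) := by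
    rw [← zpow_natCast z (N - 1), ← zpow_natCast z (N - 1 - j), ← _root_.zpow_neg,
      ← zpow_add₀ hz, ← zpow_add₀ hz]
    congr 1
    omega
  rw [h2]
  have h3 : z ^ ((j : ℤ) - N) * (z ^ 2) ^ (N - j) = z ^ ((N : ℤ) - j) := by
    rw [← pow_mul, ← zpow_natCast z (2 * (N - j)), ← zpow_add₀ hz]
    congr 1
    omega
  rw [mul_sub, mul_one, h3]

lemma prod_Ioi_rev {M : Type*} [CommMonoid M] {N : ℕ} (f : Fin N → Fin N → M) :
    (∏ i, ∏ j ∈ Ioi i, f (Fin.rev j) (Fin.rev i)) = ∏ i, ∏ j ∈ Ioi i, f i j := by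
  rw [prod_sigma', prod_sigma']
  refine prod_nbij' (fun p => ⟨Fin.rev p.2, Fin.rev p.1⟩)
    (fun p => ⟨Fin.rev p.2, Fin.rev p.1⟩) ?_ ?_ ?_ ?_ ?_ <;>
  simp [Fin.rev_lt_rev]

lemma triangle_swap {M : Type*} [CommMonoid M] {N : ℕ} (f : Fin N → Fin N → M) :
    (∏ i, ∏ j ∈ Ioi i, f i j) = ∏ j, ∏ i ∈ Iio j, f i j := by
  rw [prod_sigma', prod_sigma']
  refine prod_nbij' (fun p => ⟨p.2, p.1⟩) (fun p => ⟨p.2, p.1⟩) ?_ ?_ ?_ ?_ ?_ <;> simp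

/-- Type C_N Weyl denominator formula: for nonzero `z₁, …, z_N`,
`det( z_k^{j-N-1} − z_k^{N+1-j} ) = ∏_ℓ z_ℓ^{-N} (1 − z_ℓ²) ·
∏_{j<k} (z_k − z_j)(1 − z_j z_k)`, indices `j, k` running over `1, …, N`. -/
theorem weyl_denominator_C (N : ℕ) (z : Fin N → ℂ) (hz : ∀ ℓ, z ℓ ≠ 0) :
    Matrix.det (Matrix.of fun j k : Fin N =>
        z k ^ (((j : ℕ) : ℤ) + 1 - (N : ℤ) - 1) -
          z k ^ ((N : ℤ) + 1 - (((j : ℕ) : ℤ) + 1))) =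
      (∏ ℓ : Fin N, z ℓ ^ (-(N : ℤ)) * (1 - z ℓ ^ 2)) *
        ∏ j : Fin N, ∏ k ∈ Finset.Ioi j, (z k - z j) * (1 - z j * z k) := by
  classical
  set w : Fin N → ℂ := fun k => z k + (z k)⁻¹ with hw
  set c : Fin N → ℂ := fun k => z k ^ (-(N : ℤ)) * (1 - z k ^ 2) * z k ^ (N - 1) with hc
  have hstep1 : (Matrix.of fun j k : Fin N =>
        z k ^ (((j : ℕ) : ℤ) + 1 - (N : ℤ) - 1) -
          z k ^ ((N : ℤ) + 1 - (((j : ℕ) : ℤ) + 1)))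
      = Matrix.of (fun j k : Fin N => c k *
          (Matrix.of fun j k : Fin N => (Spoly (N - 1 - (j : ℕ))).eval (w k)) j k) := by
    ext j k
    have h := entry_eq N (z k) (hz k) j j.isLt
    have e1 : ((j : ℕ) : ℤ) + 1 - (N : ℤ) - 1 = (j : ℤ) - N := by ring
    have e2 : (N : ℤ) + 1 - (((j : ℕ) : ℤ) + 1) = (N : ℤ) - j := by ring
    simp only [Matrix.of_apply, e1, e2, hc, hw]
    exact h
  rw [hstep1, Matrix.det_mul_row c (Matrix.of fun j k : Fin N => (Spoly (N - 1 - (j : ℕ))).eval (w k))]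
  have hsub : (Matrix.of fun j k : Fin N => (Spoly (N - 1 - (j : ℕ))).eval (w k)) =
      ((Matrix.of fun i j : Fin N => (Spoly ((j : ℕ))).eval (w (Fin.rev i))).submatrix
        Fin.revPerm Fin.revPerm)ᵀ := by
    ext j k
    simp only [Matrix.transpose_apply, Matrix.submatrix_apply, Matrix.of_apply,
      Fin.revPerm_apply, Fin.rev_rev]
    have hjr : ((Fin.rev j) : ℕ) = N - 1 - (j : ℕ) := by rw [Fin.val_rev]; omega
    rw [hjr]
  rw [hsub, Matrix.det_transpose, Matrix.det_submatrix_equiv_self]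
  rw [← Matrix.det_eval_matrixOfPolynomials_eq_det_vandermonde (fun i => w (Fin.rev i))
    (fun j => Spoly (j : ℕ)) (fun i => (Spoly_aux i).1.2) (fun i => (Spoly_aux i).1.1)]
  rw [Matrix.det_vandermonde]
  have hrev : (∏ i, ∏ j ∈ Ioi i, (w (Fin.rev j) - w (Fin.rev i)))
      = ∏ i, ∏ j ∈ Ioi i, (w i - w j) := prod_Ioi_rev (fun a b => w a - w b)
  rw [hrev]
  have hwij : ∀ i j : Fin N, w i - w j = ((z j - z i) * (1 - z i * z j)) * (z i * z j)⁻¹ := by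
    intro i j
    rw [hw]
    field_simp [hz i, hz j]
    ring
  simp_rw [hwij]
  rw [show (∏ i, ∏ j ∈ Ioi i, ((z j - z i) * (1 - z i * z j)) * (z i * z j)⁻¹)
      = (∏ i, ∏ j ∈ Ioi i, (z j - z i) * (1 - z i * z j)) *
        ((∏ i, ∏ j ∈ Ioi i, (z i * z j))⁻¹) by
    rw [← Finset.prod_inv_distrib]
    rw [← Finset.prod_mul_distrib]
    refine Finset.prod_congr rfl fun i _ => ?_
    rw [← Finset.prod_inv_distrib, ← Finset.prod_mul_distrib]]
  have hzz : (∏ i, ∏ j ∈ Ioi i, (z i * z j)) = ∏ k, z k ^ (N - 1) := by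
    have h1 : (∏ i, ∏ j ∈ Ioi i, (z i * z j))
        = (∏ i, z i ^ (N - 1 - (i : ℕ))) * ∏ i, ∏ j ∈ Ioi i, z j := by
      rw [← Finset.prod_mul_distrib]
      refine Finset.prod_congr rfl fun i _ => ?_
      rw [Finset.prod_mul_distrib, Finset.prod_const, Fin.card_Ioi]
    have h2 : (∏ i : Fin N, ∏ j ∈ Ioi i, z j) = ∏ j : Fin N, z j ^ (j : ℕ) := by
      rw [triangle_swap (fun i j => z j)]
      refine Finset.prod_congr rfl fun j _ => ?_
      rw [Finset.prod_const, Fin.card_Iio]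
    rw [h1, h2, ← Finset.prod_mul_distrib]
    refine Finset.prod_congr rfl fun i _ => ?_
    rw [← pow_add]
    congr 1
    have := i.isLt
    omega
  rw [hzz]
  have hfinal : (∏ k, c k) * ((∏ k, z k ^ (N - 1))⁻¹)
      = ∏ ℓ, z ℓ ^ (-(N : ℤ)) * (1 - z ℓ ^ 2) := by
    rw [← Finset.prod_inv_distrib, ← Finset.prod_mul_distrib]
    refine Finset.prod_congr rfl fun k _ => ?_
    rw [hc]
    field_simp
    rw [mul_div_cancel_right₀ _ (pow_ne_zero (N - 1) (hz k))]
  rw [← hfinal]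
  ring
end

section
/- (Type D_N Weyl denominator formula) For any N nonzero complex numbers z₁, …, z_N with N ≥ 1, det_{1≤j,k≤N}( z_k^{j-N} + z_k^{N-j} ) = 2 ∏_{ℓ=1}^{N} z_ℓ^{1-N} · ∏_{1≤j<k≤N} (z_k − z_j)(1 − z_j z_k). -/
open Polynomial Matrix Finset

private lemma dickson_natDegree_le : ∀ m : ℕ, (Polynomial.dickson 1 (1:ℂ) m).natDegree ≤ m := by
  intro m
  induction m using Nat.twoStepInduction with
  | zero => rw [dickson_zero]; norm_num
  | one => rw [dickson_one]; simp
  | more n ih1 ih2 =>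
    rw [dickson_add_two]
    refine le_trans (natDegree_sub_le _ _) (max_le ?_ ?_)
    · refine le_trans (natDegree_mul_le) ?_
      rw [natDegree_X]
      omega
    · refine le_trans (natDegree_mul_le) ?_
      simp only [natDegree_C, zero_add]
      omega

private lemma dickson_coeff_self : ∀ m : ℕ,
    (Polynomial.dickson 1 (1:ℂ) m).coeff m = if m = 0 then 2 else 1 := by
  intro m
  induction m using Nat.twoStepInduction with
  | zero => rw [dickson_zero]; norm_num
  | one => rw [dickson_one]; simp
  | more n ih1 ih2 =>
    rw [dickson_add_two]
    have h0 : (Polynomial.dickson 1 (1:ℂ) n).coeff (n + 2) = 0 :=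
      coeff_eq_zero_of_natDegree_lt (by have := dickson_natDegree_le n; omega)
    rw [coeff_sub, show n + 2 = (n + 1) + 1 from rfl, coeff_X_mul]
    simp only [C_1, one_mul, h0, sub_zero, ih2]
    simp

/-- Type D_N Weyl denominator formula: for nonzero `z₁, …, z_N`, `N ≥ 1`,
`det( z_k^{j-N} + z_k^{N-j} ) = 2 ∏_ℓ z_ℓ^{1-N} ·
∏_{j<k} (z_k − z_j)(1 − z_j z_k)`, indices `j, k` running over `1, …, N`. -/
theorem weyl_denominator_D (N : ℕ) (hN : 1 ≤ N) (z : Fin N → ℂ) (hz : ∀ ℓ, z ℓ ≠ 0) :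
    Matrix.det (Matrix.of fun j k : Fin N =>
        z k ^ (((j : ℕ) : ℤ) + 1 - (N : ℤ)) +
          z k ^ ((N : ℤ) - (((j : ℕ) : ℤ) + 1))) =
      2 * (∏ ℓ : Fin N, z ℓ ^ (1 - (N : ℤ))) *
        ∏ j : Fin N, ∏ k ∈ Finset.Ioi j, (z k - z j) * (1 - z j * z k) := by
  classical
  set d : ℕ → ℂ[X] := fun m => Polynomial.dickson 1 1 m with hd
  set t : Fin N → ℂ := fun k => z k + (z k)⁻¹ with ht
  set E : Matrix (Fin N) (Fin N) ℂ :=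
    Matrix.of (fun j i : Fin N => (d (j : ℕ)).coeff (i : ℕ)) with hE
  -- Step 1: factor the matrix
  have hM : (Matrix.of fun j k : Fin N =>
        z k ^ (((j : ℕ) : ℤ) + 1 - (N : ℤ)) + z k ^ ((N : ℤ) - (((j : ℕ) : ℤ) + 1)))
      = (E.submatrix Fin.revPerm id) * (Matrix.vandermonde t)ᵀ := by
    ext j k
    have hsum : ((E.submatrix Fin.revPerm id) * (Matrix.vandermonde t)ᵀ) j k
        = ∑ i : Fin N, (d ((Fin.rev j : Fin N) : ℕ)).coeff (i : ℕ) * t k ^ (i : ℕ) := by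
      simp [Matrix.mul_apply, hE, Matrix.vandermonde]
    have hdeg : (d ((Fin.rev j : Fin N) : ℕ)).natDegree < N :=
      lt_of_le_of_lt (dickson_natDegree_le _) (Fin.rev j).isLt
    have heval : ∑ i : Fin N, (d ((Fin.rev j : Fin N) : ℕ)).coeff (i : ℕ) * t k ^ (i : ℕ)
        = (d ((Fin.rev j : Fin N) : ℕ)).eval (t k) := by
      rw [Fin.sum_univ_eq_sum_range (fun i => (d ((Fin.rev j : Fin N) : ℕ)).coeff i * t k ^ i)]
      exact (Polynomial.eval_eq_sum_range' hdeg (t k)).symm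
    have hdick : (d ((Fin.rev j : Fin N) : ℕ)).eval (t k)
        = z k ^ ((Fin.rev j : Fin N) : ℕ) + ((z k)⁻¹) ^ ((Fin.rev j : Fin N) : ℕ) :=
      Polynomial.dickson_one_one_eval_add_inv (z k) (z k)⁻¹ (mul_inv_cancel₀ (hz k)) _
    rw [hsum, heval, hdick]
    have hrev : ((Fin.rev j : Fin N) : ℕ) = N - ((j : ℕ) + 1) := Fin.val_rev j
    have h1 : ((N : ℤ) - (((j : ℕ) : ℤ) + 1)) = (((Fin.rev j : Fin N) : ℕ) : ℤ) := by
      have := j.isLt; rw [hrev]; push_cast; omega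
    have h2 : (((j : ℕ) : ℤ) + 1 - (N : ℤ)) = -((((Fin.rev j : Fin N) : ℕ)) : ℤ) := by
      have := j.isLt; rw [hrev]; push_cast; omega
    rw [Matrix.of_apply, h1, h2, _root_.zpow_neg, zpow_natCast, ← inv_pow]
    ring
  rw [hM, Matrix.det_mul, Matrix.det_transpose, Matrix.det_vandermonde, Matrix.det_permute]
  -- Step 2: determinant of the triangular coefficient matrix
  have hdetE : E.det = 2 := by
    have htri : E.BlockTriangular OrderDual.toDual := by
      intro i j hij
      have : (j : ℕ) > (i : ℕ) := hij
      exact coeff_eq_zero_of_natDegree_lt (lt_of_le_of_lt (dickson_natDegree_le _) this)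
    rw [Matrix.det_of_lowerTriangular E htri]
    obtain ⟨M, rfl⟩ : ∃ M, N = M + 1 := ⟨N - 1, by omega⟩
    rw [Fin.prod_univ_succ]
    have h0 : E 0 0 = 2 := by
      show (d ((0 : Fin (M+1)) : ℕ)).coeff ((0 : Fin (M+1)) : ℕ) = 2
      rw [hd]; rw [dickson_coeff_self]; simp
    have h1 : ∀ i : Fin M, E i.succ i.succ = 1 := by
      intro i
      show (d ((i.succ : Fin (M+1)) : ℕ)).coeff ((i.succ : Fin (M+1)) : ℕ) = 1
      rw [hd]; rw [dickson_coeff_self]; simp [Fin.val_succ]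
    rw [h0]
    simp [h1]
  -- Step 3: the sign times the Vandermonde product equals the reversed product
  have hsign : ((Equiv.Perm.sign (Fin.revPerm : Equiv.Perm (Fin N)) : ℤ) : ℂ) *
        (∏ i : Fin N, ∏ j ∈ Finset.Ioi i, (t j - t i))
      = ∏ i : Fin N, ∏ j ∈ Finset.Ioi i, (t i - t j) := by
    have h1 : ((Matrix.vandermonde t).submatrix Fin.revPerm id).det
        = (Equiv.Perm.sign (Fin.revPerm : Equiv.Perm (Fin N)) : ℂ) * (Matrix.vandermonde t).det :=
      Matrix.det_permute _ _
    have h2 : (Matrix.vandermonde t).submatrix Fin.revPerm id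
        = Matrix.vandermonde (fun i => t (Fin.rev i)) := by
      ext i j; simp [Matrix.vandermonde, Fin.revPerm]
    have h3 : ∏ i : Fin N, ∏ j ∈ Finset.Ioi i, (t (Fin.rev j) - t (Fin.rev i))
        = ∏ i : Fin N, ∏ j ∈ Finset.Ioi i, (t i - t j) := by
      rw [Finset.prod_sigma', Finset.prod_sigma']
      refine Finset.prod_nbij' (fun p => ⟨Fin.rev p.2, Fin.rev p.1⟩)
        (fun p => ⟨Fin.rev p.2, Fin.rev p.1⟩) ?_ ?_ ?_ ?_ ?_
      · rintro ⟨a, b⟩ hab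
        simp only [Finset.mem_sigma, Finset.mem_univ, Finset.mem_Ioi, true_and] at hab ⊢
        exact Fin.rev_lt_rev.mpr hab
      · rintro ⟨a, b⟩ hab
        simp only [Finset.mem_sigma, Finset.mem_univ, Finset.mem_Ioi, true_and] at hab ⊢
        exact Fin.rev_lt_rev.mpr hab
      · rintro ⟨a, b⟩ _; simp [Fin.rev_rev]
      · rintro ⟨a, b⟩ _; simp [Fin.rev_rev]
      · rintro ⟨a, b⟩ _; simp [Fin.rev_rev]
    rw [h2, Matrix.det_vandermonde, Matrix.det_vandermonde] at h1
    rw [← h1, h3]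
  -- Step 4: rewrite the reversed Vandermonde product in terms of z
  have hIoi : ∀ i : Fin N, (Finset.Ioi i).card = N - 1 - (i : ℕ) := fun i => Fin.card_Ioi i
  have hIio : ∀ i : Fin N, (Finset.Iio i).card = (i : ℕ) := fun i => Fin.card_Iio i
  have hzz : ∏ i : Fin N, ∏ j ∈ Finset.Ioi i, (z i * z j) = ∏ ℓ : Fin N, z ℓ ^ (N - 1) := by
    have hswap : ∏ i : Fin N, ∏ j ∈ Finset.Ioi i, z j
        = ∏ j : Fin N, ∏ i ∈ Finset.Iio j, z j := by
      refine Finset.prod_comm' ?_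
      intro x y
      simp [Finset.mem_Ioi, Finset.mem_Iio]
    calc ∏ i : Fin N, ∏ j ∈ Finset.Ioi i, (z i * z j)
        = (∏ i : Fin N, ∏ j ∈ Finset.Ioi i, z i) * ∏ i : Fin N, ∏ j ∈ Finset.Ioi i, z j := by
          rw [← Finset.prod_mul_distrib]
          exact Finset.prod_congr rfl fun i _ => Finset.prod_mul_distrib
      _ = (∏ i : Fin N, z i ^ (N - 1 - (i : ℕ))) * ∏ i : Fin N, z i ^ (i : ℕ) := by
          rw [hswap]
          congr 1
          · exact Finset.prod_congr rfl fun i _ => by rw [Finset.prod_const, hIoi]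
          · exact Finset.prod_congr rfl fun i _ => by rw [Finset.prod_const, hIio]
      _ = ∏ ℓ : Fin N, z ℓ ^ (N - 1) := by
          rw [← Finset.prod_mul_distrib]
          refine Finset.prod_congr rfl fun i _ => ?_
          rw [← pow_add]
          congr 1
          have := i.isLt; omega
  have hinv : ∏ ℓ : Fin N, z ℓ ^ ((1 : ℤ) - (N : ℤ)) = (∏ ℓ : Fin N, z ℓ ^ (N - 1))⁻¹ := by
    rw [← Finset.prod_inv_distrib]
    refine Finset.prod_congr rfl fun ℓ _ => ?_
    rw [← zpow_natCast (z ℓ) (N - 1), ← _root_.zpow_neg]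
    congr 1
    push_cast [Nat.cast_sub hN]
    ring
  have hB : ∏ i : Fin N, ∏ j ∈ Finset.Ioi i, (t i - t j)
      = (∏ i : Fin N, ∏ j ∈ Finset.Ioi i, (z j - z i) * (1 - z i * z j))
        * (∏ ℓ : Fin N, z ℓ ^ ((1 : ℤ) - (N : ℤ))) := by
    have hpt : ∀ i j : Fin N, t i - t j = ((z j - z i) * (1 - z i * z j)) * (z i * z j)⁻¹ := by
      intro i j
      have hi := hz i
      have hj := hz j
      rw [ht]
      field_simp
      ring
    calc ∏ i : Fin N, ∏ j ∈ Finset.Ioi i, (t i - t j)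
        = ∏ i : Fin N, ∏ j ∈ Finset.Ioi i, ((z j - z i) * (1 - z i * z j)) * (z i * z j)⁻¹ := by
          exact Finset.prod_congr rfl fun i _ => Finset.prod_congr rfl fun j _ => hpt i j
      _ = (∏ i : Fin N, ∏ j ∈ Finset.Ioi i, (z j - z i) * (1 - z i * z j))
            * ∏ i : Fin N, ∏ j ∈ Finset.Ioi i, (z i * z j)⁻¹ := by
          rw [← Finset.prod_mul_distrib]
          exact Finset.prod_congr rfl fun i _ => Finset.prod_mul_distrib
      _ = (∏ i : Fin N, ∏ j ∈ Finset.Ioi i, (z j - z i) * (1 - z i * z j))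
            * (∏ ℓ : Fin N, z ℓ ^ ((1 : ℤ) - (N : ℤ))) := by
          congr 1
          rw [hinv, ← hzz, ← Finset.prod_inv_distrib]
          exact Finset.prod_congr rfl fun i _ => Finset.prod_inv_distrib _
  -- Assemble
  rw [hdetE]
  calc (Equiv.Perm.sign (Fin.revPerm : Equiv.Perm (Fin N)) : ℂ) * 2 *
        ∏ i : Fin N, ∏ j ∈ Finset.Ioi i, (t j - t i)
      = 2 * ((Equiv.Perm.sign (Fin.revPerm : Equiv.Perm (Fin N)) : ℂ) *
          ∏ i : Fin N, ∏ j ∈ Finset.Ioi i, (t j - t i)) := by ring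
    _ = 2 * ∏ i : Fin N, ∏ j ∈ Finset.Ioi i, (t i - t j) := by rw [← hsign]
    _ = 2 * (∏ ℓ : Fin N, z ℓ ^ (1 - (N : ℤ))) *
        ∏ j : Fin N, ∏ k ∈ Finset.Ioi j, (z k - z j) * (1 - z j * z k) := by
        rw [hB]; ring
end
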